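/- In the 3D Lamé problem for a pressurized cylinder, the radial displacement w_r(ζ) = (pR²/4)(1 − 1/(2R))²[(1−2ν)(1+ζ) + (1 + 1/(2R))²/(1+ζ)] has thickness average over ζ ∈ (−1/(2R), 1/(2R)) equal to the refined-shell prediction pR²(1 − (1−σ)/(2R))/(2(1+σ)) up to an error of order 1/R², where σ = ν/(1−ν). -/

import Mathlib

open intervalIntegral

set_option maxHeartbeats 1000000 in
/-- The thickness average of the 3D Lamé radial displacement for a pressurized
cylinder agrees with the refined-shell prediction up to a bounded (O(1))
error as `R → ∞` (hence relative error `O(1/R²)`). -/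
theorem lame_average_matches_refined_shell
    (ν p : ℝ) (hν0 : 0 ≤ ν) (hν : ν < 1 / 2) :
    let σ := ν / (1 - ν)
    let w : ℝ → ℝ → ℝ := fun R ζ =>
      (p * R ^ 2 / 4) * (1 - 1 / (2 * R)) ^ 2 *
        ((1 - 2 * ν) * (1 + ζ) + (1 + 1 / (2 * R)) ^ 2 / (1 + ζ))
    let W : ℝ → ℝ := fun R => R * ∫ ζ in (-(1 / (2 * R)))..(1 / (2 * R)), w R ζ
    let U : ℝ → ℝ := fun R => p * R ^ 2 * (1 - (1 - σ) / (2 * R)) / (2 * (1 + σ))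
    ∃ C : ℝ, ∀ R : ℝ, 2 ≤ R → |W R - U R| ≤ C := by
  intro σ w W U
  refine ⟨|p|, fun R hR => ?_⟩
  have hR0 : (0:ℝ) < R := by linarith
  have hRne : R ≠ 0 := ne_of_gt hR0
  set h : ℝ := 1 / (2 * R) with hhdef
  have hh0 : 0 < h := by positivity
  have hh4 : h ≤ 1 / 4 := by
    rw [hhdef, div_le_div_iff₀ (by positivity) (by norm_num)]
    linarith
  have hRh : R * h = 1 / 2 := by
    rw [hhdef]; field_simp
  have hhle : -h ≤ h := by linarith
  have hpos : ∀ ζ ∈ Set.Icc (-h) h, (0:ℝ) < 1 + ζ := by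
    intro ζ hζ; have := hζ.1; linarith
  -- integrability
  have hcont : ContinuousOn (fun ζ : ℝ => (1 + ζ)⁻¹) (Set.uIcc (-h) h) := by
    refine ContinuousOn.inv₀ (by fun_prop) ?_
    intro ζ hζ
    rw [Set.uIcc_of_le hhle] at hζ
    exact ne_of_gt (hpos ζ hζ)
  have hint2 : IntervalIntegrable (fun ζ : ℝ => (1 + ζ)⁻¹) MeasureTheory.volume (-h) h :=
    hcont.intervalIntegrable
  have hint1 : IntervalIntegrable (fun ζ : ℝ => 1 + ζ) MeasureTheory.volume (-h) h :=
    (continuous_const.add continuous_id).intervalIntegrable _ _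
  have hint3 : IntervalIntegrable (fun ζ : ℝ => 1 - ζ) MeasureTheory.volume (-h) h :=
    (continuous_const.sub continuous_id).intervalIntegrable _ _
  have hint4 : IntervalIntegrable (fun ζ : ℝ => ζ ^ 2 * (1 - h)⁻¹) MeasureTheory.volume (-h) h :=
    ((continuous_pow 2).mul continuous_const).intervalIntegrable _ _
  -- basic polynomial integrals
  have hI1 : (∫ ζ in (-h)..h, (1 + ζ)) = 2 * h := by
    rw [integral_add intervalIntegrable_const intervalIntegrable_id,
      integral_const, integral_id]
    simp; ring
  have hI3 : (∫ ζ in (-h)..h, (1 - ζ)) = 2 * h := by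
    rw [integral_sub intervalIntegrable_const intervalIntegrable_id,
      integral_const, integral_id]
    simp; ring
  have hI4 : (∫ ζ in (-h)..h, ζ ^ 2 * (1 - h)⁻¹) = 2 * h ^ 3 / 3 * (1 - h)⁻¹ := by
    rw [integral_mul_const, integral_pow]
    push_cast
    ring
  set I : ℝ := ∫ ζ in (-h)..h, (1 + ζ)⁻¹ with hIdef
  -- lower bound for I
  have hIlow : 2 * h ≤ I := by
    have hmono : (∫ ζ in (-h)..h, (1 - ζ)) ≤ I := by
      refine integral_mono_on hhle hint3 hint2 ?_
      intro ζ hζ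
      have h1 : 0 < 1 + ζ := hpos ζ hζ
      have hle1 : (1 - ζ) * (1 + ζ) ≤ 1 := by nlinarith [sq_nonneg ζ]
      have := (le_div_iff₀ h1).mpr hle1
      simpa [one_div] using this
    linarith [hI3]
  -- upper bound for I
  have hIup : I ≤ 2 * h + h ^ 3 := by
    have hmono : I ≤ ∫ ζ in (-h)..h, ((1 - ζ) + ζ ^ 2 * (1 - h)⁻¹) := by
      refine integral_mono_on hhle hint2 (hint3.add hint4) ?_
      intro ζ hζ
      have h1 : 0 < 1 + ζ := hpos ζ hζ
      have h2 : (0:ℝ) < 1 - h := by linarith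
      have hk : (1 - h) * (1 - h)⁻¹ = 1 := mul_inv_cancel₀ (ne_of_gt h2)
      have hk0 : (0:ℝ) ≤ (1 - h)⁻¹ := le_of_lt (inv_pos.mpr h2)
      have hζl : -h ≤ ζ := hζ.1
      have key : 1 ≤ ((1 - ζ) + ζ ^ 2 * (1 - h)⁻¹) * (1 + ζ) := by
        nlinarith [sq_nonneg ζ, mul_nonneg (sq_nonneg ζ) hk0,
          mul_le_mul_of_nonneg_left (show 1 - h ≤ 1 + ζ by linarith)
            (mul_nonneg (sq_nonneg ζ) hk0)]
      have := (div_le_iff₀ h1).mpr key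
      simpa [one_div] using this
    have heq : (∫ ζ in (-h)..h, ((1 - ζ) + ζ ^ 2 * (1 - h)⁻¹)) =
        2 * h + 2 * h ^ 3 / 3 * (1 - h)⁻¹ := by
      rw [integral_add hint3 hint4, hI3, hI4]
    have hinv : (1 - h)⁻¹ ≤ 4 / 3 := by
      rw [inv_le_comm₀ (by linarith) (by norm_num)]
      linarith
    have hbd : 2 * h ^ 3 / 3 * (1 - h)⁻¹ ≤ h ^ 3 := by
      nlinarith [pow_pos hh0 3, inv_pos.mpr (show (0:ℝ) < 1 - h by linarith)]
    linarith
  -- compute the integral of w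
  set c1 : ℝ := (p * R ^ 2 / 4) * (1 - h) ^ 2 * (1 - 2 * ν) with hc1
  set c2 : ℝ := (p * R ^ 2 / 4) * (1 - h) ^ 2 * (1 + h) ^ 2 with hc2
  have hwint : (∫ ζ in (-h)..h, w R ζ) = c1 * (2 * h) + c2 * I := by
    have hfun : ∀ ζ ∈ Set.uIcc (-h) h,
        w R ζ = c1 * (1 + ζ) + c2 * (1 + ζ)⁻¹ := by
      intro ζ hζ
      simp only [w, hc1, hc2, ← hhdef]
      rw [Set.uIcc_of_le hhle] at hζ
      have h1 : (1 + ζ) ≠ 0 := ne_of_gt (hpos ζ hζ)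
      field_simp
    rw [integral_congr hfun,
      integral_add (hint1.const_mul c1) (hint2.const_mul c2),
      integral_const_mul, integral_const_mul, hI1, hIdef]
  -- main decomposition
  set E : ℝ := I - 2 * h with hE
  have hE0 : 0 ≤ E := by simp only [hE]; linarith
  have hEup : E ≤ h ^ 3 := by simp only [hE]; linarith
  have hWval : W R = c1 + c2 + R * c2 * E := by
    have hW' : W R = R * (c1 * (2 * h) + c2 * I) := by
      simp only [W, ← hhdef, hwint]
    have hI' : I = E + 2 * h := by rw [hE]; ring
    rw [hW', hI']
    linear_combination (2 * c1 + 2 * c2) * hRh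
  have hν1 : (0:ℝ) < 1 - ν := by linarith
  have hν1' : (1:ℝ) - ν ≠ 0 := ne_of_gt hν1
  have hU : U R = p * R ^ 2 / 2 * ((1 - ν) - (1 - 2 * ν) * h) := by
    simp only [U, σ]
    have e1 : (1:ℝ) + ν / (1 - ν) = 1 / (1 - ν) := by field_simp; ring
    have e2 : (1:ℝ) - ν / (1 - ν) = (1 - 2 * ν) / (1 - ν) := by field_simp; ring
    rw [e1, e2, hhdef]
    field_simp
  have hX : c1 + c2 - U R = p / 16 * (h ^ 2 - 1 - 2 * ν) := by
    rw [hU, hc2, hc1]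
    linear_combination (p * (-1/8 - ν/4 + h^2/8 - R*h/4 - R*h*ν/2 + R*h^3/4)) * hRh
  have hfinal : W R - U R = p / 16 * (h ^ 2 - 1 - 2 * ν) + R * c2 * E := by
    rw [hWval]; linarith [hX]
  clear_value E I c1 c2 h
  rw [hfinal]
  clear hfinal hX hU hWval hwint hIdef hIlow hIup hI1 hI3 hI4
    hint1 hint2 hint3 hint4 hcont hpos hE hc1 hhdef
  clear W w U σ
  -- bounds
  have b1 : |p / 16 * (h ^ 2 - 1 - 2 * ν)| ≤ |p| / 8 := by
    rw [abs_mul]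
    have habs : |h ^ 2 - 1 - 2 * ν| ≤ 2 := by
      have h2a : 0 ≤ h ^ 2 := sq_nonneg h
      have h2b : h ^ 2 ≤ 1 := by nlinarith
      rw [abs_le]
      constructor <;> linarith
    have hp16 : |p / 16| = |p| / 16 := by rw [abs_div]; norm_num
    rw [hp16]
    have hmul := mul_le_mul_of_nonneg_left habs (by positivity : (0:ℝ) ≤ |p| / 16)
    linarith
  have hc2b : |c2| ≤ |p| * R ^ 2 / 4 := by
    rw [hc2, abs_mul, abs_mul, abs_of_nonneg (sq_nonneg (1 - h)),
      abs_of_nonneg (sq_nonneg (1 + h))]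
    have e : |p * R ^ 2 / 4| = |p| * R ^ 2 / 4 := by
      rw [abs_div, abs_mul, abs_of_nonneg (sq_nonneg R)]; norm_num
    rw [e]
    have hsq : (1 - h) ^ 2 * (1 + h) ^ 2 ≤ 1 := by nlinarith [sq_nonneg h, sq_nonneg (h * h)]
    have h0 : (0:ℝ) ≤ |p| * R ^ 2 / 4 := by positivity
    calc |p| * R ^ 2 / 4 * (1 - h) ^ 2 * (1 + h) ^ 2
        = |p| * R ^ 2 / 4 * ((1 - h) ^ 2 * (1 + h) ^ 2) := by ring
      _ ≤ |p| * R ^ 2 / 4 * 1 := mul_le_mul_of_nonneg_left hsq h0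
      _ = |p| * R ^ 2 / 4 := by ring
  have b2 : |R * c2 * E| ≤ |p| / 32 := by
    rw [abs_mul, abs_mul, abs_of_pos hR0, abs_of_nonneg hE0]
    have step : R * |c2| * E ≤ R * (|p| * R ^ 2 / 4) * h ^ 3 := by
      have h1 : R * |c2| ≤ R * (|p| * R ^ 2 / 4) :=
        mul_le_mul_of_nonneg_left hc2b (le_of_lt hR0)
      exact mul_le_mul h1 hEup hE0 (by positivity)
    have h8 : R ^ 3 * h ^ 3 = 1 / 8 := by
      linear_combination (R ^ 2 * h ^ 2 + R * h / 2 + 1 / 4) * hRh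
    have eq : R * (|p| * R ^ 2 / 4) * h ^ 3 = |p| / 32 := by
      linear_combination (|p| / 4) * h8
    linarith
  calc |p / 16 * (h ^ 2 - 1 - 2 * ν) + R * c2 * E|
      ≤ |p / 16 * (h ^ 2 - 1 - 2 * ν)| + |R * c2 * E| := abs_add_le _ _
    _ ≤ |p| := by have := abs_nonneg p; linarith
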